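/- Fix an integer a with a ≠ 0 and a ≠ -1. Let v1=(1,0,0), v2=(0,1,0), v3=(0,0,1), v4=(0,-1,-a), v5=(0,0,-1), v6=(-1,1,-1), v7=(-1,0,-1), v8=(-1,-1,0) in ℝ³. Every point of ℝ³ lies in at least one of the 12 cones ⟨v1,v2,v3⟩, ⟨v1,v3,v4⟩, ⟨v1,v4,v5⟩, ⟨v1,v5,v6⟩, ⟨v1,v2,v6⟩, ⟨v2,v3,v8⟩, ⟨v3,v4,v8⟩, ⟨v4,v5,v8⟩, ⟨v5,v6,v7⟩, ⟨v5,v7,v8⟩, ⟨v6,v7,v8⟩, ⟨v2,v6,v8⟩. -/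

import Mathlib

def cone3 (u v w : Fin 3 → ℝ) : Set (Fin 3 → ℝ) :=
  {x | ∃ α β γ : ℝ, 0 ≤ α ∧ 0 ≤ β ∧ 0 ≤ γ ∧ x = α • u + β • v + γ • w}

lemma mem_cone3 {u v w x : Fin 3 → ℝ} {α β γ : ℝ} (hα : 0 ≤ α) (hβ : 0 ≤ β) (hγ : 0 ≤ γ)
    (h0 : x 0 = α * u 0 + β * v 0 + γ * w 0)
    (h1 : x 1 = α * u 1 + β * v 1 + γ * w 1)
    (h2 : x 2 = α * u 2 + β * v 2 + γ * w 2) : x ∈ cone3 u v w :=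
  ⟨α, β, γ, hα, hβ, hγ, funext fun i => by
    fin_cases i <;> simp only [Pi.add_apply, Pi.smul_apply, smul_eq_mul, Fin.isValue] <;>
      [exact h0; exact h1; exact h2]⟩

theorem stmt10 (a : ℤ) (ha0 : a ≠ 0) (ha1 : a ≠ -1) : ∀ x : Fin 3 → ℝ,
      x ∈ cone3 ![1,0,0] ![0,1,0] ![0,0,1] ∨
      x ∈ cone3 ![1,0,0] ![0,0,1] ![0,-1,-(a:ℝ)] ∨
      x ∈ cone3 ![1,0,0] ![0,-1,-(a:ℝ)] ![0,0,-1] ∨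
      x ∈ cone3 ![1,0,0] ![0,0,-1] ![-1,1,-1] ∨
      x ∈ cone3 ![1,0,0] ![0,1,0] ![-1,1,-1] ∨
      x ∈ cone3 ![0,1,0] ![0,0,1] ![-1,-1,0] ∨
      x ∈ cone3 ![0,0,1] ![0,-1,-(a:ℝ)] ![-1,-1,0] ∨
      x ∈ cone3 ![0,-1,-(a:ℝ)] ![0,0,-1] ![-1,-1,0] ∨
      x ∈ cone3 ![0,0,-1] ![-1,1,-1] ![-1,0,-1] ∨
      x ∈ cone3 ![0,0,-1] ![-1,0,-1] ![-1,-1,0] ∨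
      x ∈ cone3 ![-1,1,-1] ![-1,0,-1] ![-1,-1,0] ∨
      x ∈ cone3 ![0,1,0] ![-1,1,-1] ![-1,-1,0] := by
  intro x
  set p := x 0 with hp'
  set q := x 1 with hq'
  set r := x 2 with hr'
  rcases le_total 0 p with hp | hp
  · rcases le_total 0 q with hq | hq
    · rcases le_total 0 r with hr | hr
      · -- cone A
        exact Or.inl (mem_cone3 hp hq hr (by simp; rfl) (by simp; rfl) (by simp; rfl))
      · rcases le_total 0 (q + r) with h | h
        · -- cone E : v1 v2 v6, α = p - r, β = q + r, γ = -r
          refine Or.inr (Or.inr (Or.inr (Or.inr (Or.inl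
            (mem_cone3 (α := p - r) (β := q + r) (γ := -r)
              (by linarith) (by linarith) (by linarith)
              (by simp; try ring) (by simp; try ring) (by simp; rfl))))))
        · -- cone D : v1 v5 v6, α = p + q, β = -r - q, γ = q
          refine Or.inr (Or.inr (Or.inr (Or.inl
            (mem_cone3 (α := p + q) (β := -r - q) (γ := q)
              (by linarith) (by linarith) (by linarith)
              (by simp; try ring) (by simp; rfl) (by simp; try ring)))))
    · rcases le_total ((a : ℝ) * q) r with h | h
      · -- cone B : v1 v3 v4, α = p, β = r - a q, γ = -q
        refine Or.inr (Or.inl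
          (mem_cone3 (α := p) (β := r - a * q) (γ := -q)
            (by linarith) (by linarith) (by linarith)
            (by simp; rfl) (by simp; rfl) (by simp; try ring)))
      · -- cone C : v1 v4 v5, α = p, β = -q, γ = a q - r
        refine Or.inr (Or.inr (Or.inl
          (mem_cone3 (α := p) (β := -q) (γ := (a : ℝ) * q - r)
            (by linarith) (by linarith) (by linarith)
            (by simp; rfl) (by simp; rfl) (by simp; try ring))))
  · rcases le_total q p with hq | hq
    · rcases le_total 0 (r + (a : ℝ) * (p - q)) with h | h
      · -- cone G : v3 v4 v8, α = r + a(p-q), β = p - q, γ = -p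
        refine Or.inr (Or.inr (Or.inr (Or.inr (Or.inr (Or.inr (Or.inl
          (mem_cone3 (α := r + (a : ℝ) * (p - q)) (β := p - q) (γ := -p)
            (by linarith) (by linarith) (by linarith)
            (by simp; rfl) (by simp; try ring) (by simp; try ring))))))))
      · -- cone H : v4 v5 v8, α = p - q, β = -a(p-q) - r, γ = -p
        refine Or.inr (Or.inr (Or.inr (Or.inr (Or.inr (Or.inr (Or.inr (Or.inl
          (mem_cone3 (α := p - q) (β := -(a : ℝ) * (p - q) - r) (γ := -p)
            (by linarith) (by linarith) (by linarith)
            (by simp; rfl) (by simp; try ring) (by simp; try ring)))))))))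
    · rcases le_total 0 r with hr | hr
      · -- cone F : v2 v3 v8, α = q - p, β = r, γ = -p
        refine Or.inr (Or.inr (Or.inr (Or.inr (Or.inr (Or.inl
          (mem_cone3 (α := q - p) (β := r) (γ := -p)
            (by linarith) (by linarith) (by linarith)
            (by simp; rfl) (by simp; try ring) (by simp; rfl)))))))
      · rcases le_total p r with hrp | hrp
        · rcases le_total (p - 2 * r) q with h | h
          · -- cone L : v2 v6 v8, α = q + 2r - p, β = -r, γ = r - p
            refine Or.inr (Or.inr (Or.inr (Or.inr (Or.inr (Or.inr (Or.inr (Or.inr (Or.inr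
              (Or.inr (Or.inr
              (mem_cone3 (α := q + 2 * r - p) (β := -r) (γ := r - p)
                (by linarith) (by linarith) (by linarith)
                (by simp; try ring) (by simp; try ring) (by simp; try ring))))))))))))
          · rcases le_total p (q + r) with h2 | h2
            · -- cone K : v6 v7 v8, α = q + r - p, β = p - q - 2r, γ = r - p
              refine Or.inr (Or.inr (Or.inr (Or.inr (Or.inr (Or.inr (Or.inr (Or.inr (Or.inr
                (Or.inr (Or.inl
                (mem_cone3 (α := q + r - p) (β := p - q - 2 * r) (γ := r - p)
                  (by linarith) (by linarith) (by linarith)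
                  (by simp; try ring) (by simp; try ring) (by simp; try ring))))))))))))
            · -- here q ≤ 0 (else contradiction); cone J : v5 v7 v8
              have hq0 : q ≤ 0 := by linarith
              refine Or.inr (Or.inr (Or.inr (Or.inr (Or.inr (Or.inr (Or.inr (Or.inr (Or.inr
                (Or.inl
                (mem_cone3 (α := p - q - r) (β := q - p) (γ := -q)
                  (by linarith) (by linarith) (by linarith)
                  (by simp; try ring) (by simp; rfl) (by simp; try ring)))))))))))
        · rcases le_total q 0 with hq0 | hq0
          · -- cone J : v5 v7 v8, α = p - q - r, β = q - p, γ = -q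
            refine Or.inr (Or.inr (Or.inr (Or.inr (Or.inr (Or.inr (Or.inr (Or.inr (Or.inr
              (Or.inl
              (mem_cone3 (α := p - q - r) (β := q - p) (γ := -q)
                (by linarith) (by linarith) (by linarith)
                (by simp; try ring) (by simp; rfl) (by simp; try ring)))))))))))
          · rcases le_total (-r) q with h | h
            · -- cone E : v1 v2 v6, α = p - r, β = q + r, γ = -r
              refine Or.inr (Or.inr (Or.inr (Or.inr (Or.inl
                (mem_cone3 (α := p - r) (β := q + r) (γ := -r)
                  (by linarith) (by linarith) (by linarith)
                  (by simp; try ring) (by simp; try ring) (by simp; rfl))))))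
            · rcases le_total q (-p) with h2 | h2
              · -- cone I : v5 v6 v7, α = p - r, β = q, γ = -p - q
                refine Or.inr (Or.inr (Or.inr (Or.inr (Or.inr (Or.inr (Or.inr (Or.inr (Or.inl
                  (mem_cone3 (α := p - r) (β := q) (γ := -p - q)
                    (by linarith) (by linarith) (by linarith)
                    (by simp; try ring) (by simp; rfl) (by simp; try ring))))))))))
              · -- cone D : v1 v5 v6, α = p + q, β = -r - q, γ = q
                refine Or.inr (Or.inr (Or.inr (Or.inl
                  (mem_cone3 (α := p + q) (β := -r - q) (γ := q)
                    (by linarith) (by linarith) (by linarith)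
                    (by simp; try ring) (by simp; rfl) (by simp; try ring)))))
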